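/- Let A_K ∈ ℝ^{n×n}, E ∈ ℝ^{n×1}, C ∈ ℝ^{1×n} with C ≠ 0, and P ∈ ℝ^{n×n} symmetric positive definite. The following are equivalent: (i) for all w ∈ ℝ and all nonzero x ∈ ℝ^n with w(w − Cx) ≤ 0, one has (A_Kx + Ew)ᵀP(A_Kx + Ew) − xᵀPx < 0; (ii) there exists α ≥ 0 such that [[P − A_KᵀPA_K, −A_KᵀPE],[−EᵀPA_K, −EᵀPE]] − α[[0, ½Cᵀ],[½C, −1]] is positive definite. -/

import Mathlib

open Matrix

section AbsStabAux

lemma abs_stab_quad_cont {ι : Type*} [Fintype ι] (M : Matrix ι ι ℝ) :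
    Continuous fun z : ι → ℝ => z ⬝ᵥ (M *ᵥ z) := by
  simp only [dotProduct, mulVec]
  exact continuous_finset_sum _ fun i _ => (continuous_apply i).mul
    (continuous_finset_sum _ fun j _ => continuous_const.mul (continuous_apply j))

lemma abs_stab_quad_smul {ι : Type*} [Fintype ι] (M : Matrix ι ι ℝ) (c : ℝ) (z : ι → ℝ) :
    (c • z) ⬝ᵥ (M *ᵥ (c • z)) = c ^ 2 * (z ⬝ᵥ (M *ᵥ z)) := by
  rw [mulVec_smul, dotProduct_smul, smul_dotProduct, smul_eq_mul, smul_eq_mul]; ring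

lemma abs_stab_quad_expand {ι : Type*} [Fintype ι] (M : Matrix ι ι ℝ) (a b : ℝ) (u v : ι → ℝ) :
    (a • u + b • v) ⬝ᵥ (M *ᵥ (a • u + b • v)) =
      a ^ 2 * (u ⬝ᵥ (M *ᵥ u)) + a * b * (u ⬝ᵥ (M *ᵥ v) + v ⬝ᵥ (M *ᵥ u))
        + b ^ 2 * (v ⬝ᵥ (M *ᵥ v)) := by
  rw [mulVec_add, mulVec_smul, mulVec_smul, add_dotProduct, smul_dotProduct, smul_dotProduct,
    dotProduct_add, dotProduct_add, dotProduct_smul, dotProduct_smul, dotProduct_smul,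
    dotProduct_smul]
  simp only [smul_eq_mul]; ring

lemma abs_stab_quad_sub_smul {ι : Type*} [Fintype ι] (N S : Matrix ι ι ℝ) (α : ℝ) (z : ι → ℝ) :
    z ⬝ᵥ ((N - α • S) *ᵥ z) = z ⬝ᵥ (N *ᵥ z) - α * (z ⬝ᵥ (S *ᵥ z)) := by
  rw [sub_mulVec, dotProduct_sub, smul_mulVec, dotProduct_smul, smul_eq_mul]

lemma abs_stab_closed {ι : Type*} [Fintype ι] (fN fS : (ι → ℝ) → ℝ) (hfN : Continuous fN)
    (hfS : Continuous fS) (T : Set ℝ) (hT : IsClosed T) :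
    IsClosed {α : ℝ | ∃ z ∈ Metric.sphere (0 : ι → ℝ) 1, fS z ∈ T ∧ fN z - α * fS z ≤ 0} := by
  apply IsSeqClosed.isClosed
  intro u α hu hlim
  choose z hzK hzT hzle using hu
  obtain ⟨z', hz'K, φ, hφ, hzlim⟩ :=
    (isCompact_sphere (0 : ι → ℝ) 1).tendsto_subseq hzK
  refine ⟨z', hz'K, ?_, ?_⟩
  · exact hT.mem_of_tendsto (hfS.continuousAt.tendsto.comp hzlim)
      (Filter.Eventually.of_forall fun n => hzT (φ n))
  · have h1 : Filter.Tendsto (fun n => fN (z (φ n)) - u (φ n) * fS (z (φ n)))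
        Filter.atTop (nhds (fN z' - α * fS z')) :=
      ((hfN.continuousAt.tendsto.comp hzlim).sub
        ((hlim.comp hφ.tendsto_atTop).mul (hfS.continuousAt.tendsto.comp hzlim)))
    exact le_of_tendsto h1 (Filter.Eventually.of_forall fun n => hzle (φ n))

/-- Strict homogeneous S-lemma. -/
lemma abs_stab_slemma {ι : Type*} [Fintype ι] (N S : Matrix ι ι ℝ)
    (z₀ : ι → ℝ) (hz₀ : 0 < z₀ ⬝ᵥ (S *ᵥ z₀))
    (hH : ∀ z : ι → ℝ, z ≠ 0 → 0 ≤ z ⬝ᵥ (S *ᵥ z) → 0 < z ⬝ᵥ (N *ᵥ z)) :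
    ∃ α : ℝ, 0 ≤ α ∧ ∀ z : ι → ℝ, z ≠ 0 → 0 < z ⬝ᵥ ((N - α • S) *ᵥ z) := by
  by_contra hcon
  push_neg at hcon
  set fN : (ι → ℝ) → ℝ := fun z => z ⬝ᵥ (N *ᵥ z) with hfN
  set fS : (ι → ℝ) → ℝ := fun z => z ⬝ᵥ (S *ᵥ z) with hfS
  set K : Set (ι → ℝ) := Metric.sphere 0 1 with hK
  have hKz : ∀ z ∈ K, z ≠ 0 := by
    intro z hz h0
    rw [hK, mem_sphere_zero_iff_norm, h0, norm_zero] at hz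
    norm_num at hz
  set U : Set ℝ := {α | ∃ z ∈ K, fS z ∈ Set.Ici (0:ℝ) ∧ fN z - α * fS z ≤ 0} with hUdef
  set L : Set ℝ := {α | ∃ z ∈ K, fS z ∈ Set.Iic (0:ℝ) ∧ fN z - α * fS z ≤ 0} with hLdef
  have hUclosed : IsClosed U :=
    abs_stab_closed fN fS (abs_stab_quad_cont N) (abs_stab_quad_cont S) _ isClosed_Ici
  have hLclosed : IsClosed L :=
    abs_stab_closed fN fS (abs_stab_quad_cont N) (abs_stab_quad_cont S) _ isClosed_Iic
  have hnorm : ∀ z : ι → ℝ, z ≠ 0 → ∃ y ∈ K, (∀ M : Matrix ι ι ℝ,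
      y ⬝ᵥ (M *ᵥ y) = (‖z‖⁻¹) ^ 2 * (z ⬝ᵥ (M *ᵥ z))) := by
    intro z hz
    refine ⟨‖z‖⁻¹ • z, ?_, fun M => abs_stab_quad_smul M _ z⟩
    rw [hK, mem_sphere_zero_iff_norm]
    exact norm_smul_inv_norm hz
  have hcover : Set.Ici (0:ℝ) ⊆ U ∪ L := by
    intro α hα
    obtain ⟨z, hz0, hzle⟩ := hcon α hα
    obtain ⟨y, hyK, hy⟩ := hnorm z hz0
    rw [abs_stab_quad_sub_smul] at hzle
    have hsq : (0:ℝ) < (‖z‖⁻¹) ^ 2 := by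
      have : ‖z‖ ≠ 0 := norm_ne_zero_iff.mpr hz0
      positivity
    have hyle : fN y - α * fS y ≤ 0 := by
      have e1 : fN y = (‖z‖⁻¹) ^ 2 * (z ⬝ᵥ (N *ᵥ z)) := hy N
      have e2 : fS y = (‖z‖⁻¹) ^ 2 * (z ⬝ᵥ (S *ᵥ z)) := hy S
      rw [e1, e2]
      nlinarith
    rcases le_total 0 (fS y) with h | h
    · exact Or.inl ⟨y, hyK, h, hyle⟩
    · exact Or.inr ⟨y, hyK, h, hyle⟩
  have hUne : (Set.Ici (0:ℝ) ∩ U).Nonempty := by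
    have hz00 : z₀ ≠ 0 := by
      intro h; rw [h] at hz₀; simp at hz₀
    obtain ⟨y, hyK, hy⟩ := hnorm z₀ hz00
    have hSy : 0 < fS y := by
      have e2 : fS y = (‖z₀‖⁻¹) ^ 2 * (z₀ ⬝ᵥ (S *ᵥ z₀)) := hy S
      rw [e2]
      have : ‖z₀‖ ≠ 0 := norm_ne_zero_iff.mpr hz00
      positivity
    refine ⟨max 0 (fN y / fS y), Set.mem_Ici.mpr (le_max_left _ _),
      y, hyK, Set.mem_Ici.mpr hSy.le, ?_⟩
    have h1 : fN y / fS y ≤ max 0 (fN y / fS y) := le_max_right _ _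
    rw [div_le_iff₀ hSy] at h1
    linarith
  have hLne : (Set.Ici (0:ℝ) ∩ L).Nonempty := by
    refine ⟨0, Set.self_mem_Ici, ?_⟩
    have h0 : (0:ℝ) ∈ U ∪ L := hcover Set.self_mem_Ici
    rcases h0 with h | h
    · exfalso
      obtain ⟨z, hzK, hS, hle⟩ := h
      have h5 : 0 < fN z := hH z (hKz z hzK) hS
      simp only [zero_mul, sub_zero] at hle
      linarith
    · exact h
  obtain ⟨α, hα0, hαU, hαL⟩ :=
    isPreconnected_closed_iff.mp isPreconnected_Ici U L hUclosed hLclosed hcover hUne hLne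
  obtain ⟨z₁, hz₁K, hS₁, hle₁⟩ := hαU
  obtain ⟨z₂, hz₂K, hS₂, hle₂⟩ := hαL
  rw [Set.mem_Ici] at hα0 hS₁
  rw [Set.mem_Iic] at hS₂
  have hcontra : ∀ z : ι → ℝ, z ≠ 0 → fS z = 0 → fN z - α * fS z ≤ 0 → False := by
    intro z hz0 hS hle
    have h5 : 0 < fN z := hH z hz0 (le_of_eq hS.symm)
    rw [hS] at hle
    simp only [mul_zero, sub_zero] at hle
    linarith
  have hS₁pos : 0 < fS z₁ := by
    rcases lt_or_eq_of_le hS₁ with h | h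
    · exact h
    · exact absurd (hcontra z₁ (hKz z₁ hz₁K) h.symm hle₁) not_false
  have hS₂neg : fS z₂ < 0 := by
    rcases lt_or_eq_of_le hS₂ with h | h
    · exact h
    · exact absurd (hcontra z₂ (hKz z₂ hz₂K) h hle₂) not_false
  set b : ℝ := z₁ ⬝ᵥ ((N - α • S) *ᵥ z₂) + z₂ ⬝ᵥ ((N - α • S) *ᵥ z₁) with hb
  set ε : ℝ := if b ≤ 0 then 1 else -1 with hε
  have hε2 : ε ^ 2 = 1 := by
    rw [hε]; split <;> norm_num
  have hεb : ε * b ≤ 0 := by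
    rw [hε]; split
    · simpa
    · push_neg at *; nlinarith
  set ζ : ℝ → (ι → ℝ) := fun t => (1 - t) • z₁ + (ε * t) • z₂ with hζ
  have hζcont : Continuous fun t => fS (ζ t) := by
    apply (abs_stab_quad_cont S).comp
    apply Continuous.add
    · exact (continuous_const.sub continuous_id).smul continuous_const
    · exact (continuous_const.mul continuous_id).smul continuous_const
  have hζ0 : fS (ζ 0) = fS z₁ := by
    rw [hζ]; simp
  have hζexp : ∀ (M : Matrix ι ι ℝ) (t : ℝ), (ζ t) ⬝ᵥ (M *ᵥ (ζ t)) =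
      (1 - t) ^ 2 * (z₁ ⬝ᵥ (M *ᵥ z₁)) +
        (1 - t) * (ε * t) * (z₁ ⬝ᵥ (M *ᵥ z₂) + z₂ ⬝ᵥ (M *ᵥ z₁)) +
        (ε * t) ^ 2 * (z₂ ⬝ᵥ (M *ᵥ z₂)) := fun M t => abs_stab_quad_expand M (1 - t) (ε * t) z₁ z₂
  have hζ1 : fS (ζ 1) = fS z₂ := by
    have h := hζexp S 1
    have h2 : (ε * 1) ^ 2 = 1 := by rw [mul_one]; exact hε2
    rw [h2] at h
    have h3 : fS (ζ 1) = (ζ 1) ⬝ᵥ (S *ᵥ (ζ 1)) := rfl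
    rw [h3, h]; ring
  have hIVT : ∃ t ∈ Set.Icc (0:ℝ) 1, fS (ζ t) = 0 := by
    have h01 : (0:ℝ) ∈ Set.Icc (fS (ζ 1)) (fS (ζ 0)) := by
      rw [hζ0, hζ1]; exact ⟨hS₂neg.le, hS₁pos.le⟩
    obtain ⟨t, ht, hfst⟩ := intermediate_value_Icc' (by norm_num : (0:ℝ) ≤ 1)
      hζcont.continuousOn h01
    exact ⟨t, ht, hfst⟩
  obtain ⟨t, ⟨ht0, ht1⟩, htS⟩ := hIVT
  have ht2 : (ε * t) ^ 2 = t ^ 2 := by rw [mul_pow, hε2, one_mul]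
  have hval : fN (ζ t) - α * fS (ζ t) ≤ 0 := by
    have hq : fN (ζ t) - α * fS (ζ t) = (ζ t) ⬝ᵥ ((N - α • S) *ᵥ (ζ t)) :=
      (abs_stab_quad_sub_smul N S α (ζ t)).symm
    rw [hq, hζexp (N - α • S) t, ht2]
    have e1 : z₁ ⬝ᵥ ((N - α • S) *ᵥ z₁) = fN z₁ - α * fS z₁ := abs_stab_quad_sub_smul N S α z₁
    have e2 : z₂ ⬝ᵥ ((N - α • S) *ᵥ z₂) = fN z₂ - α * fS z₂ := abs_stab_quad_sub_smul N S α z₂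
    rw [e1, e2, ← hb]
    have hmid : (1 - t) * t * (ε * b) ≤ 0 :=
      mul_nonpos_of_nonneg_of_nonpos (mul_nonneg (by linarith) ht0) hεb
    nlinarith [mul_nonpos_of_nonneg_of_nonpos (sq_nonneg (1 - t)) hle₁,
      mul_nonpos_of_nonneg_of_nonpos (sq_nonneg t) hle₂]
  have hζne : ζ t ≠ 0 := by
    intro h0
    have heq : (1 - t) • z₁ = -((ε * t) • z₂) := by
      have h1 : (1 - t) • z₁ + (ε * t) • z₂ = 0 := h0
      rwa [add_eq_zero_iff_eq_neg] at h1
    have h1 : ((1 - t) • z₁) ⬝ᵥ (S *ᵥ ((1 - t) • z₁)) = (1 - t) ^ 2 * fS z₁ :=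
      abs_stab_quad_smul S _ z₁
    have h2 : (-((ε * t) • z₂)) ⬝ᵥ (S *ᵥ (-((ε * t) • z₂))) = t ^ 2 * fS z₂ := by
      rw [show -((ε * t) • z₂) = (-(ε * t)) • z₂ from (neg_smul _ _).symm,
        abs_stab_quad_smul, neg_pow, ht2]
      simp
      exact Or.inl rfl
    have hqeq : (1 - t) ^ 2 * fS z₁ = t ^ 2 * fS z₂ := by
      rw [← h1, ← h2, heq]
    rcases lt_or_ge t 1 with h | h
    · have hlt : 0 < (1 - t) ^ 2 * fS z₁ := mul_pos (pow_pos (by linarith) 2) hS₁pos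
      nlinarith [mul_nonpos_of_nonneg_of_nonpos (sq_nonneg t) hS₂neg.le]
    · have ht1' : t = 1 := le_antisymm ht1 h
      rw [ht1'] at hqeq
      norm_num at hqeq
      linarith
  have h6 : 0 < fN (ζ t) := hH (ζ t) hζne (le_of_eq htS.symm)
  rw [htS] at hval
  simp only [mul_zero, sub_zero] at hval
  linarith

lemma abs_stab_dp1 {m k : Type*} [Fintype m] [Fintype k] (A : Matrix m k ℝ) (x : k → ℝ)
    (u : m → ℝ) : x ⬝ᵥ (Aᵀ *ᵥ u) = (A *ᵥ x) ⬝ᵥ u := by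
  rw [dotProduct_mulVec, vecMul_transpose]

lemma abs_stab_quadM1 {n : ℕ} (AK : Matrix (Fin n) (Fin n) ℝ) (E : Matrix (Fin n) (Fin 1) ℝ)
    (P : Matrix (Fin n) (Fin n) ℝ) (z : Fin n ⊕ Fin 1 → ℝ) :
    z ⬝ᵥ ((fromBlocks (P - AKᵀ * P * AK) (-(AKᵀ * P * E))
        (-(Eᵀ * P * AK)) (-(Eᵀ * P * E))) *ᵥ z) =
      (z ∘ Sum.inl) ⬝ᵥ (P *ᵥ (z ∘ Sum.inl)) -
        (AK *ᵥ (z ∘ Sum.inl) + E *ᵥ (z ∘ Sum.inr)) ⬝ᵥ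
          (P *ᵥ (AK *ᵥ (z ∘ Sum.inl) + E *ᵥ (z ∘ Sum.inr))) := by
  conv_lhs => rw [← Sum.elim_comp_inl_inr z]
  rw [fromBlocks_mulVec, sumElim_dotProduct_sumElim]
  simp only [Sum.elim_comp_inl, Sum.elim_comp_inr, sub_mulVec, neg_mulVec, dotProduct_add,
    dotProduct_sub, dotProduct_neg, mulVec_add, add_dotProduct, ← mulVec_mulVec]
  rw [abs_stab_dp1 (A := AK), abs_stab_dp1 (A := AK), abs_stab_dp1 (A := E),
    abs_stab_dp1 (A := E)]
  ring

lemma abs_stab_quadM2 {n : ℕ} (C : Matrix (Fin 1) (Fin n) ℝ) (z : Fin n ⊕ Fin 1 → ℝ) :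
    z ⬝ᵥ ((fromBlocks (0 : Matrix (Fin n) (Fin n) ℝ) ((1/2 : ℝ) • Cᵀ) ((1/2 : ℝ) • C)
        (-(1 : Matrix (Fin 1) (Fin 1) ℝ))) *ᵥ z) =
      z (Sum.inr 0) * (C *ᵥ (z ∘ Sum.inl)) 0 - z (Sum.inr 0) * z (Sum.inr 0) := by
  conv_lhs => rw [← Sum.elim_comp_inl_inr z]
  rw [fromBlocks_mulVec, sumElim_dotProduct_sumElim]
  simp only [Sum.elim_comp_inl, Sum.elim_comp_inr, zero_mulVec, zero_add, smul_mulVec,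
    dotProduct_smul, neg_mulVec, one_mulVec, dotProduct_add, dotProduct_neg, smul_eq_mul]
  rw [abs_stab_dp1 (A := C)]
  simp only [dotProduct, Fin.sum_univ_one, Function.comp_apply]
  ring

lemma abs_stab_herm {n : ℕ} (AK : Matrix (Fin n) (Fin n) ℝ) (E : Matrix (Fin n) (Fin 1) ℝ)
    (C : Matrix (Fin 1) (Fin n) ℝ) (P : Matrix (Fin n) (Fin n) ℝ) (hPt : Pᵀ = P) (α : ℝ) :
    ((fromBlocks (P - AKᵀ * P * AK) (-(AKᵀ * P * E)) (-(Eᵀ * P * AK)) (-(Eᵀ * P * E)) -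
      α • fromBlocks (0 : Matrix (Fin n) (Fin n) ℝ) ((1/2 : ℝ) • Cᵀ) ((1/2 : ℝ) • C)
        (-(1 : Matrix (Fin 1) (Fin 1) ℝ)))).IsHermitian := by
  rw [Matrix.IsHermitian, conjTranspose_eq_transpose_of_trivial, transpose_sub, transpose_smul,
    fromBlocks_transpose, fromBlocks_transpose]
  simp only [transpose_sub, transpose_neg, transpose_mul, transpose_transpose, transpose_smul,
    transpose_one, transpose_zero, hPt, Matrix.mul_assoc]

end AbsStabAux

/-- Absolute stability characterization (Section V): via the classical S-lemma,
the Lyapunov decrease along the sector constraint is equivalent to an LMI. -/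
theorem absolute_stability_characterization {n : ℕ}
    (AK : Matrix (Fin n) (Fin n) ℝ) (E : Matrix (Fin n) (Fin 1) ℝ)
    (C : Matrix (Fin 1) (Fin n) ℝ) (P : Matrix (Fin n) (Fin n) ℝ)
    (hC : C ≠ 0) (hP : P.PosDef) :
    (∀ (w : ℝ) (x : Fin n → ℝ), x ≠ 0 → w * (w - (C *ᵥ x) 0) ≤ 0 →
        (AK *ᵥ x + E *ᵥ (fun _ => w)) ⬝ᵥ (P *ᵥ (AK *ᵥ x + E *ᵥ (fun _ => w))) -
          x ⬝ᵥ (P *ᵥ x) < 0) ↔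
      ∃ α : ℝ, 0 ≤ α ∧
        (fromBlocks (P - AKᵀ * P * AK) (-(AKᵀ * P * E))
            (-(Eᵀ * P * AK)) (-(Eᵀ * P * E)) -
          α • fromBlocks (0 : Matrix (Fin n) (Fin n) ℝ)
            ((1/2 : ℝ) • Cᵀ) ((1/2 : ℝ) • C)
            (-(1 : Matrix (Fin 1) (Fin 1) ℝ))).PosDef := by
  set M₁ : Matrix (Fin n ⊕ Fin 1) (Fin n ⊕ Fin 1) ℝ :=
    fromBlocks (P - AKᵀ * P * AK) (-(AKᵀ * P * E)) (-(Eᵀ * P * AK)) (-(Eᵀ * P * E)) with hM₁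
  set M₂ : Matrix (Fin n ⊕ Fin 1) (Fin n ⊕ Fin 1) ℝ :=
    fromBlocks (0 : Matrix (Fin n) (Fin n) ℝ) ((1/2 : ℝ) • Cᵀ) ((1/2 : ℝ) • C)
      (-(1 : Matrix (Fin 1) (Fin 1) ℝ)) with hM₂
  have hPt : Pᵀ = P := by
    have h' : Pᴴ = P := hP.1
    rwa [conjTranspose_eq_transpose_of_trivial] at h'
  -- helper : fun _ => z (Sum.inr 0) equals z ∘ Sum.inr
  have hfun : ∀ z : Fin n ⊕ Fin 1 → ℝ, (fun _ : Fin 1 => z (Sum.inr 0)) = z ∘ Sum.inr := by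
    intro z; funext i
    have : i = 0 := Subsingleton.elim i 0
    rw [this]; rfl
  constructor
  · -- hard direction : S-lemma
    intro hH
    -- strict feasibility
    obtain ⟨j, hj⟩ : ∃ j, C 0 j ≠ 0 := by
      by_contra h
      push_neg at h
      apply hC
      ext i k
      have : i = 0 := Subsingleton.elim i 0
      rw [this]
      simpa using h k
    set c : ℝ := C 0 j with hc
    set z₀ : Fin n ⊕ Fin 1 → ℝ := Sum.elim (Pi.single j 1) (fun _ => c / 2) with hz₀def
    have hz₀ : 0 < z₀ ⬝ᵥ (M₂ *ᵥ z₀) := by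
      rw [hM₂, abs_stab_quadM2]
      have h1 : z₀ ∘ Sum.inl = Pi.single j 1 := rfl
      have h2 : z₀ (Sum.inr 0) = c / 2 := rfl
      rw [h1, h2, mulVec_single_one]
      simp only [col_apply]
      rw [← hc]
      have hc2 : 0 < c ^ 2 := by positivity
      nlinarith
    have hHq : ∀ z : Fin n ⊕ Fin 1 → ℝ, z ≠ 0 → 0 ≤ z ⬝ᵥ (M₂ *ᵥ z) → 0 < z ⬝ᵥ (M₁ *ᵥ z) := by
      intro z hz hzS
      rw [hM₂, abs_stab_quadM2] at hzS
      set x : Fin n → ℝ := z ∘ Sum.inl with hx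
      set w : ℝ := z (Sum.inr 0) with hw
      have hxne : x ≠ 0 := by
        intro hx0
        apply hz
        have hw0 : w = 0 := by
          rw [hx0, mulVec_zero] at hzS
          simp only [Pi.zero_apply, mul_zero, zero_sub, neg_nonneg] at hzS
          nlinarith [mul_self_nonneg w]
        funext i
        cases i with
        | inl k => exact congrFun hx0 k
        | inr k =>
          have : k = 0 := Subsingleton.elim k 0
          rw [this]
          exact hw0
      have hcons : w * (w - (C *ᵥ x) 0) ≤ 0 := by nlinarith
      have := hH w x hxne hcons
      rw [hM₁, abs_stab_quadM1]
      rw [hfun z] at this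
      linarith
    obtain ⟨α, hα, hpos⟩ := abs_stab_slemma M₁ M₂ z₀ hz₀ hHq
    refine ⟨α, hα, PosDef.of_dotProduct_mulVec_pos (abs_stab_herm AK E C P hPt α) ?_⟩
    intro z hz
    have hstar : star z = z := by
      funext i; exact star_trivial _
    rw [hstar]
    exact hpos z hz
  · -- easy direction
    rintro ⟨α, hα, hPD⟩ w x hx hcons
    obtain ⟨hherm, hpos⟩ := posDef_iff_dotProduct_mulVec.mp hPD
    set z : Fin n ⊕ Fin 1 → ℝ := Sum.elim x (fun _ => w) with hzdef
    have hz : z ≠ 0 := by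
      intro h0
      apply hx
      funext i
      exact congrFun h0 (Sum.inl i)
    have := hpos hz
    have hstar : star z = z := by
      funext i; exact star_trivial _
    rw [hstar, abs_stab_quad_sub_smul, hM₁, hM₂, abs_stab_quadM1, abs_stab_quadM2] at this
    have h1 : z ∘ Sum.inl = x := rfl
    have h2 : z ∘ Sum.inr = fun _ => w := rfl
    have h3 : z (Sum.inr 0) = w := rfl
    rw [h1, h2, h3] at this
    nlinarith
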